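/- Let C be a clutter over ground set V in which every member has cardinality at least two, and let k >= 2 be an integer. Then C has a proper k-colouring if and only if the blocker b(C) is not k-wise intersecting, i.e., there exist at most k minimal covers of C with empty intersection. -/
import Mathlib


/-- `B` is a cover of the clutter `C`: it intersects every member. -/
def IsCover {V : Type*} [DecidableEq V] (C : Finset (Finset V)) (B : Finset V) : Prop :=
  ∀ A ∈ C, (A ∩ B).Nonempty

/-- The blocker of `C`: the family of inclusion-minimal covers of `C`. -/
def Blocker {V : Type*} [DecidableEq V] (C : Finset (Finset V)) : Set (Finset V) :=
  {B | IsCover C B ∧ ∀ B' ⊆ B, IsCover C B' → B' = B}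

lemma exists_minimal_cover {V : Type*} [DecidableEq V] (C : Finset (Finset V)) :
    ∀ B : Finset V, IsCover C B → ∃ B' ⊆ B, B' ∈ Blocker C := by
  intro B
  induction B using Finset.strongInductionOn with
  | _ B ih =>
    intro hB
    by_cases h : ∀ B' ⊆ B, IsCover C B' → B' = B
    · exact ⟨B, subset_rfl, hB, h⟩
    · push_neg at h
      obtain ⟨B', hsub, hcov, hne⟩ := h
      obtain ⟨B'', h1, h2⟩ := ih B' (HasSubset.Subset.ssubset_of_ne hsub hne) hcov
      exact ⟨B'', h1.trans hsub, h2⟩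

/-- A clutter all of whose members have cardinality at least two has a proper
`k`-colouring if and only if its blocker is not `k`-wise intersecting, i.e. there exist at most
`k` minimal covers with empty intersection. -/
theorem stmt_1 {V : Type*} [Fintype V] [DecidableEq V] (C : Finset (Finset V))
    (hclutter : ∀ A ∈ C, ∀ B ∈ C, A ⊆ B → A = B)
    (hcard : ∀ A ∈ C, 2 ≤ A.card)
    (k : ℕ) (hk : 2 ≤ k) :
    (∃ c : V → Fin k, ∀ A ∈ C, ¬ ∃ i : Fin k, ∀ v ∈ A, c v = i) ↔
    (∃ F : Finset (Finset V), F.card ≤ k ∧ (∀ B ∈ F, B ∈ Blocker C) ∧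
      ¬ ∃ v : V, ∀ B ∈ F, v ∈ B) := by
  constructor
  · rintro ⟨c, hc⟩
    -- complement of colour class i is a cover
    have hDcov : ∀ i : Fin k, IsCover C (Finset.univ.filter (fun v => c v ≠ i)) := by
      intro i A hA
      have hAne : A.Nonempty := Finset.card_pos.mp (lt_of_lt_of_le (by norm_num) (hcard A hA))
      have := hc A hA
      have h2 : ¬ ∀ v ∈ A, c v = i := fun h => this ⟨i, h⟩
      push_neg at h2
      obtain ⟨v, hvA, hvi⟩ := h2
      exact ⟨v, Finset.mem_inter.mpr ⟨hvA, Finset.mem_filter.mpr ⟨Finset.mem_univ _, hvi⟩⟩⟩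
    choose g hg1 hg2 using fun i : Fin k => exists_minimal_cover C _ (hDcov i)
    refine ⟨(Finset.univ : Finset (Fin k)).image g, ?_, ?_, ?_⟩
    · calc _ ≤ (Finset.univ : Finset (Fin k)).card := Finset.card_image_le
        _ = k := by simp
    · intro B hB
      obtain ⟨i, _, hi⟩ := Finset.mem_image.mp hB
      exact hi ▸ hg2 i
    · rintro ⟨v, hv⟩
      have hvmem : v ∈ g (c v) := hv _ (Finset.mem_image.mpr ⟨c v, Finset.mem_univ _, rfl⟩)
      have := hg1 (c v) hvmem
      simp at this
  · rintro ⟨F, hFk, hFB, hFv⟩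
    push_neg at hFv
    choose f hf1 hf2 using hFv
    -- embed F into Fin k
    have hcardle : Fintype.card ↥F ≤ Fintype.card (Fin k) := by
      simpa using hFk
    obtain ⟨ι⟩ := Function.Embedding.nonempty_of_card_le hcardle
    refine ⟨fun v => ι ⟨f v, hf1 v⟩, ?_⟩
    rintro A hA ⟨i, hi⟩
    have hAne : A.Nonempty := Finset.card_pos.mp (lt_of_lt_of_le (by norm_num) (hcard A hA))
    obtain ⟨v₀, hv₀⟩ := hAne
    have hcov : IsCover C (f v₀) := (hFB _ (hf1 v₀)).1
    obtain ⟨w, hw⟩ := hcov A hA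
    rw [Finset.mem_inter] at hw
    have heq : ι ⟨f w, hf1 w⟩ = ι ⟨f v₀, hf1 v₀⟩ := (hi w hw.1).trans (hi v₀ hv₀).symm
    have : f w = f v₀ := Subtype.ext_iff.mp (ι.injective heq)
    exact hf2 w (this ▸ hw.2)
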